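/- The inner deterministic multirelations are exactly the fixpoints of δᵢ = η ∘ α, and the outer deterministic multirelations are exactly the fixpoints of δₒ = Λ ∘ α: δᵢ(R) = R iff R is inner deterministic, and δₒ(R) = R iff R is outer deterministic. -/
import Mathlib


universe u v w x

variable {X : Type u} {Y : Type v} {Z : Type w} {W : Type x}

/-- Relational composition. -/
def rcomp (R : Set (X × Y)) (S : Set (Y × Z)) : Set (X × Z) :=
  {p | ∃ b, (p.1, b) ∈ R ∧ (b, p.2) ∈ S}

/-- Power transpose Λ. -/
def Lam (R : Set (X × Y)) : Set (X × Set Y) :=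
  {p | p.2 = {b | (p.1, b) ∈ R}}

/-- α : postcomposition with the has-element relation. -/
def alphaM (S : Set (X × Set Y)) : Set (X × Y) :=
  {p | ∃ B, (p.1, B) ∈ S ∧ p.2 ∈ B}

/-- η : singleton embedding. -/
def etaM (R : Set (X × Y)) : Set (X × Set Y) :=
  {p | ∃ b, (p.1, b) ∈ R ∧ p.2 = {b}}

/-- Peleg composition. -/
def peleg (R : Set (X × Set Y)) (S : Set (Y × Set Z)) : Set (X × Set Z) :=
  {p | ∃ B, (p.1, B) ∈ R ∧ ∃ f : Y → Set Z, (∀ b ∈ B, (b, f b) ∈ S) ∧ p.2 = ⋃ b ∈ B, f b}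

/-- Outer deterministic: each element relates to exactly one set. -/
def OuterDet (R : Set (X × Set Y)) : Prop := ∀ a, ∃! B, (a, B) ∈ R

/-- Inner deterministic: every related set is a singleton. -/
def InnerDet (R : Set (X × Set Y)) : Prop := ∀ a B, (a, B) ∈ R → ∃ b, B = {b}

/-- Inner univalent: every related set is empty or a singleton. -/
def InnerUniv (R : Set (X × Set Y)) : Prop := ∀ a B, (a, B) ∈ R → B = ∅ ∨ ∃ b, B = {b}

/-- The unit 1_X. -/
def oneM (X : Type u) : Set (X × Set X) := {p | p.2 = {p.1}}

/-- Identity relation. -/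
def idR (X : Type u) : Set (X × X) := {p | p.1 = p.2}

/-- Hoare preorder ⊑↓. -/
def hle (R S : Set (X × Set Y)) : Prop := ∀ a A, (a, A) ∈ R → ∃ B, (a, B) ∈ S ∧ A ⊆ B

/-- Smyth preorder ⊑↑. -/
def sle (P Q : Set (X × Set Y)) : Prop := ∀ a B, (a, B) ∈ Q → ∃ A, (a, A) ∈ P ∧ A ⊆ B

/-- Down-closure. -/
def downCl (R : Set (X × Set Y)) : Set (X × Set Y) := {p | ∃ B, (p.1, B) ∈ R ∧ p.2 ⊆ B}

/-- Atoms: pairs whose second component is a singleton. -/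
def atomsM (X : Type u) (Y : Type v) : Set (X × Set Y) := {p | ∃ b, p.2 = {b}}

/-- Terminal part τ(R). -/
def tauM (R : Set (X × Set Y)) : Set (X × Set Y) := {p ∈ R | p.2 = ∅}

/-- Terminal part of R viewed as a multirelation into any other powerset. -/
def tauAs (R : Set (X × Set Y)) : Set (X × Set Z) := {p | (p.1, (∅ : Set Y)) ∈ R ∧ p.2 = ∅}

/-- Outer determinisation (fusion). -/
def deltaO (R : Set (X × Set Y)) : Set (X × Set Y) := Lam (alphaM R)

/-- Inner determinisation (fission). -/
def deltaI (R : Set (X × Set Y)) : Set (X × Set Y) := etaM (alphaM R)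

theorem stmt15 (R : Set (X × Set Y)) :
    (deltaI R = R ↔ InnerDet R) ∧ (deltaO R = R ↔ OuterDet R) := by
  constructor
  · constructor
    · rintro h a B hB
      rw [← h] at hB
      obtain ⟨b, _, rfl⟩ := hB
      exact ⟨b, rfl⟩
    · intro h
      ext ⟨a, B⟩
      constructor
      · rintro ⟨b, ⟨C, hC, hbC⟩, rfl⟩
        obtain ⟨c, rfl⟩ := h a C hC
        rw [Set.mem_singleton_iff] at hbC; subst hbC; exact hC
      · intro hB
        obtain ⟨b, rfl⟩ := h a B hB
        exact ⟨b, ⟨{b}, hB, rfl⟩, rfl⟩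
  · constructor
    · rintro h a
      refine ⟨{b | ∃ C, (a, C) ∈ R ∧ b ∈ C}, ?_, ?_⟩
      · have : (a, {b | ∃ C, (a, C) ∈ R ∧ b ∈ C}) ∈ deltaO R := rfl
        rwa [h] at this
      · intro B hB
        rw [← h] at hB
        exact hB
    · intro h
      ext ⟨a, B⟩
      obtain ⟨C, hC, huniq⟩ := h a
      constructor
      · intro hB
        have : B = {b | ∃ D, (a, D) ∈ R ∧ b ∈ D} := hB
        have hCe : {b | ∃ D, (a, D) ∈ R ∧ b ∈ D} = C := by
          ext b; constructor
          · rintro ⟨D, hD, hbD⟩; rwa [huniq D hD] at hbD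
          · intro hb; exact ⟨C, hC, hb⟩
        rw [this, hCe]; exact hC
      · intro hB
        rw [huniq B hB]
        show C = _
        ext b; constructor
        · intro hb; exact ⟨C, hC, hb⟩
        · rintro ⟨D, hD, hbD⟩; rwa [huniq D hD] at hbD
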